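/- Under the same hypotheses (ρ^π constant, Poisson equation holds), for every γ ∈ (0,1) the span of the discounted value function satisfies span(V_γ^π) ≤ 2·span(h^π). -/

import Mathlib

open Matrix

/-- The span seminorm: span(x) = max_s x(s) − min_s x(s). -/
noncomputable def spanSem {S : Type*} [Fintype S] [Nonempty S] (x : S → ℝ) : ℝ :=
  (⨆ s, x s) - ⨅ s, x s

lemma mulVec_le_ciSup' {S : Type*} [Fintype S] [Nonempty S]
    (P : Matrix S S ℝ) (hP0 : ∀ i j, 0 ≤ P i j) (hP1 : ∀ i, ∑ j, P i j = 1)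
    (x : S → ℝ) (s : S) : (P *ᵥ x) s ≤ ⨆ t, x t := by
  have hb : BddAbove (Set.range x) := Set.Finite.bddAbove (Set.finite_range x)
  calc (P *ᵥ x) s = ∑ j, P s j * x j := rfl
  _ ≤ ∑ j, P s j * (⨆ t, x t) :=
      Finset.sum_le_sum fun j _ => mul_le_mul_of_nonneg_left (le_ciSup hb j) (hP0 s j)
  _ = ⨆ t, x t := by rw [← Finset.sum_mul, hP1 s, one_mul]

lemma ciInf_le_mulVec' {S : Type*} [Fintype S] [Nonempty S]
    (P : Matrix S S ℝ) (hP0 : ∀ i j, 0 ≤ P i j) (hP1 : ∀ i, ∑ j, P i j = 1)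
    (x : S → ℝ) (s : S) : (⨅ t, x t) ≤ (P *ᵥ x) s := by
  have hb : BddBelow (Set.range x) := Set.Finite.bddBelow (Set.finite_range x)
  calc (⨅ t, x t) = ∑ j, P s j * (⨅ t, x t) := by rw [← Finset.sum_mul, hP1 s, one_mul]
  _ ≤ ∑ j, P s j * x j :=
      Finset.sum_le_sum fun j _ => mul_le_mul_of_nonneg_left (ciInf_le hb j) (hP0 s j)
  _ = (P *ᵥ x) s := rfl

/-- For a policy with constant gain satisfying the Poisson equation,
span(V_γ^π) ≤ 2·span(h^π) where V_γ^π = (I − γP_π)^{-1} r_π. -/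
theorem stmt12 {S : Type*} [Fintype S] [Nonempty S] [DecidableEq S]
    (P : Matrix S S ℝ) (hP0 : ∀ i j, 0 ≤ P i j) (hP1 : ∀ i, ∑ j, P i j = 1)
    (r : S → ℝ) (hr : ∀ s, r s ∈ Set.Icc (0 : ℝ) 1)
    (ρ h : S → ℝ)
    (hconst : ∃ c : ℝ, ρ = fun _ => c)
    (hPρ : P *ᵥ ρ = ρ)
    (hPoisson : ρ + h = r + P *ᵥ h)
    (γ : ℝ) (hγ0 : 0 < γ) (hγ1 : γ < 1) :
    spanSem (((1 : Matrix S S ℝ) - γ • P)⁻¹ *ᵥ r) ≤ 2 * spanSem h := by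
  obtain ⟨c, hc⟩ := hconst
  set A : Matrix S S ℝ := (1 : Matrix S S ℝ) - γ • P with hA
  have h1γ : (0:ℝ) < 1 - γ := by linarith
  -- determinant nonzero by strict diagonal dominance
  have hdet : IsUnit A.det := by
    have : A.det ≠ 0 := by
      apply det_ne_zero_of_sum_row_lt_diag
      intro k
      have hkk : P k k ≤ 1 := by
        rw [← hP1 k]
        exact Finset.single_le_sum (fun j _ => hP0 k j) (Finset.mem_univ k)
      have hAkk : A k k = 1 - γ * P k k := by
        simp [hA, Matrix.one_apply, Matrix.sub_apply]
      have hdiag : (0:ℝ) < 1 - γ * P k k := by nlinarith [hP0 k k]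
      have hoff : ∀ j ∈ Finset.univ.erase k, ‖A k j‖ = γ * P k j := by
        intro j hj
        have hjk : j ≠ k := Finset.ne_of_mem_erase hj
        have : A k j = -(γ * P k j) := by
          simp [hA, Matrix.one_apply, Ne.symm hjk, Matrix.sub_apply]
        rw [this, norm_neg, Real.norm_of_nonneg (mul_nonneg hγ0.le (hP0 k j))]
      rw [Finset.sum_congr rfl hoff, hAkk, Real.norm_of_nonneg hdiag.le]
      have hsum : ∑ j ∈ Finset.univ.erase k, γ * P k j = γ * (1 - P k k) := by
        rw [← Finset.mul_sum, Finset.sum_erase_eq_sub (Finset.mem_univ k), hP1 k]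
      rw [hsum]
      nlinarith [hP0 k k]
    exact Ne.isUnit this
  have hAmul : ∀ x : S → ℝ, A *ᵥ x = x - γ • (P *ᵥ x) := by
    intro x
    rw [hA, Matrix.sub_mulVec, Matrix.one_mulVec, Matrix.smul_mulVec]
  set w : S → ℝ := (1 - γ) • (A⁻¹ *ᵥ (P *ᵥ h)) with hwdef
  have hAw : A *ᵥ w = (1 - γ) • (P *ᵥ h) := by
    rw [hwdef, Matrix.mulVec_smul, Matrix.mulVec_mulVec, Matrix.mul_nonsing_inv A hdet,
      Matrix.one_mulVec]
  set u : S → ℝ := (1 / (1 - γ)) • ρ + h - w with hudef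
  have hAu : A *ᵥ u = r := by
    have h1 : A *ᵥ ((1 / (1 - γ)) • ρ) = ρ := by
      rw [Matrix.mulVec_smul, hAmul, hPρ]
      funext s
      simp only [Pi.smul_apply, Pi.sub_apply, smul_eq_mul]
      field_simp
    have hr' : r = ρ + h - P *ᵥ h := by
      funext s
      have := congrFun hPoisson s
      simp only [Pi.add_apply] at this
      simp only [Pi.add_apply, Pi.sub_apply]
      linarith
    rw [hudef, Matrix.mulVec_sub, Matrix.mulVec_add, h1, hAw, hAmul h, hr']
    funext s
    simp only [Pi.add_apply, Pi.sub_apply, Pi.smul_apply, smul_eq_mul]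
    ring
  have hVu : A⁻¹ *ᵥ r = u := by
    rw [← hAu, Matrix.mulVec_mulVec, Matrix.nonsing_inv_mul A hdet, Matrix.one_mulVec]
  -- fixed point equation for w
  have hw : ∀ s, w s = γ * (P *ᵥ w) s + (1 - γ) * (P *ᵥ h) s := by
    intro s
    have := congrFun (hAmul w) s
    rw [hAw] at this
    simp only [Pi.smul_apply, Pi.sub_apply, smul_eq_mul] at this
    linarith
  have hbw : BddAbove (Set.range w) := Set.Finite.bddAbove (Set.finite_range w)
  have hbw' : BddBelow (Set.range w) := Set.Finite.bddBelow (Set.finite_range w)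
  have hbh : BddAbove (Set.range h) := Set.Finite.bddAbove (Set.finite_range h)
  have hbh' : BddBelow (Set.range h) := Set.Finite.bddBelow (Set.finite_range h)
  have hSw : (⨆ s, w s) ≤ ⨆ s, h s := by
    have key : (⨆ s, w s) ≤ γ * (⨆ s, w s) + (1 - γ) * (⨆ s, h s) := by
      apply ciSup_le
      intro s
      rw [hw s]
      have h1 := mulVec_le_ciSup' P hP0 hP1 w s
      have h2 := mulVec_le_ciSup' P hP0 hP1 h s
      nlinarith
    nlinarith
  have hmw : (⨅ s, h s) ≤ ⨅ s, w s := by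
    have key : γ * (⨅ s, w s) + (1 - γ) * (⨅ s, h s) ≤ ⨅ s, w s := by
      apply le_ciInf
      intro s
      rw [hw s]
      have h1 := ciInf_le_mulVec' P hP0 hP1 w s
      have h2 := ciInf_le_mulVec' P hP0 hP1 h s
      nlinarith
    nlinarith
  rw [hVu, spanSem, spanSem]
  have huS : (⨆ s, u s) ≤ c / (1 - γ) + (⨆ s, h s) - ⨅ s, w s := by
    apply ciSup_le
    intro s
    have h1 : h s ≤ ⨆ t, h t := le_ciSup hbh s
    have h2 : (⨅ t, w t) ≤ w s := ciInf_le hbw' s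
    have : u s = c / (1 - γ) + h s - w s := by
      simp [hudef, hc, div_eq_mul_inv, mul_comm]
    rw [this]; linarith
  have huI : c / (1 - γ) + (⨅ s, h s) - (⨆ s, w s) ≤ ⨅ s, u s := by
    apply le_ciInf
    intro s
    have h1 : (⨅ t, h t) ≤ h s := ciInf_le hbh' s
    have h2 : w s ≤ ⨆ t, w t := le_ciSup hbw s
    have : u s = c / (1 - γ) + h s - w s := by
      simp [hudef, hc, div_eq_mul_inv, mul_comm]
    rw [this]; linarith
  linarith
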